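/- Let C ⊂ ℝ^9 be the 272-point code C = S ∪ T, where S = {±e_i ± e_j : 1 ≤ i < j ≤ 9} (144 vectors) and T is the set of 128 vectors whose ninth coordinate is 0 and whose first eight coordinates are all ±1/2 with an even number of minus signs. Then C is not locally jammed; in fact, for every x ∈ T there exists a continuous non-constant map γ : [0,1] → ℝ^9 with γ(0) = x such that for all t ∈ [0,1], |γ(t)|² = 2 and ⟨γ(t), y⟩ ≤ 1 for every y ∈ C with y ≠ x. -/

import Mathlib

set_option maxHeartbeats 1000000

open scoped RealInnerProductSpace

/-- The `Dₙ` root system: all vectors `±eᵢ ± eⱼ` with `i < j`. -/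
def DRootSystem (n : ℕ) : Set (EuclideanSpace ℝ (Fin n)) :=
  { v | ∃ i j : Fin n, i < j ∧ ∃ s t : ℝ, (s = 1 ∨ s = -1) ∧ (t = 1 ∨ t = -1) ∧
      v = s • EuclideanSpace.single i (1 : ℝ) + t • EuclideanSpace.single j (1 : ℝ) }

/-- The 128 vectors in `ℝ⁹` whose ninth coordinate is `0` and whose first eight
coordinates are all `±1/2`, with an even number of minus signs. -/
def Lambda9Tails : Set (EuclideanSpace ℝ (Fin 9)) :=
  { v | v 8 = 0 ∧ (∀ i : Fin 9, i ≠ 8 → (v i = 1 / 2 ∨ v i = -(1 / 2))) ∧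
      Even {i : Fin 9 | v i = -(1 / 2)}.ncard }

/-- The kissing configuration of the laminated lattice `Λ₉`. -/
def Lambda9Kiss : Set (EuclideanSpace ℝ (Fin 9)) :=
  DRootSystem 9 ∪ Lambda9Tails

open Classical Finset in
lemma tails_inner_eq {x y : EuclideanSpace ℝ (Fin 9)}
    (hx : x ∈ Lambda9Tails) (hy : y ∈ Lambda9Tails) :
    ⟪x, y⟫ = 2 - ((Finset.univ.filter (fun i => x i ≠ y i)).card : ℝ) / 2 := by
  obtain ⟨hx8, hxc, -⟩ := hx
  obtain ⟨hy8, hyc, -⟩ := hy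
  have h : ⟪x, y⟫ = ∑ i : Fin 9, x i * y i := by
    simp [PiLp.inner_apply, RCLike.inner_apply]
    exact Finset.sum_congr rfl fun i _ => mul_comm _ _
  rw [h]
  have key : ∀ i : Fin 9, x i * y i =
      (if i = (8 : Fin 9) then 0 else 1/4) - (if x i ≠ y i then (1/2 : ℝ) else 0) := by
    intro i
    by_cases hi : i = (8 : Fin 9)
    · subst hi
      simp [hx8, hy8]
    · rcases hxc i hi with h1 | h1 <;> rcases hyc i hi with h2 | h2 <;>
        simp [hi, h1, h2] <;> norm_num
  rw [Finset.sum_congr rfl fun i _ => key i, Finset.sum_sub_distrib]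
  have h1 : ∑ i : Fin 9, (if i = (8 : Fin 9) then (0:ℝ) else 1/4) = 2 := by
    have : ∀ i : Fin 9, (if i = (8 : Fin 9) then (0:ℝ) else 1/4)
        = 1/4 - (if i = (8 : Fin 9) then (1/4 : ℝ) else 0) := by
      intro i; by_cases h : i = (8 : Fin 9) <;> simp [h]
    rw [Finset.sum_congr rfl fun i _ => this i, Finset.sum_sub_distrib,
      Finset.sum_ite_eq' Finset.univ (8 : Fin 9) (fun _ => (1/4 : ℝ))]
    simp
    norm_num
  have h2 : ∑ i : Fin 9, (if x i ≠ y i then (1/2 : ℝ) else 0)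
      = ((Finset.univ.filter (fun i => x i ≠ y i)).card : ℝ) * (1/2) := by
    rw [← Finset.sum_filter, Finset.sum_const, nsmul_eq_mul]
  rw [h1, h2]
  ring

open Classical Finset in
lemma tails_diff_even {x y : EuclideanSpace ℝ (Fin 9)}
    (hx : x ∈ Lambda9Tails) (hy : y ∈ Lambda9Tails) :
    Even (Finset.univ.filter (fun i => x i ≠ y i)).card := by
  obtain ⟨hx8, hxc, hxe⟩ := hx
  obtain ⟨hy8, hyc, hye⟩ := hy
  set A : Finset (Fin 9) := Finset.univ.filter (fun i => x i = -(1/2)) with hA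
  set B : Finset (Fin 9) := Finset.univ.filter (fun i => y i = -(1/2)) with hB
  have hAe : Even A.card := by
    have : {i : Fin 9 | x i = -(1 / 2)}.ncard = A.card := by
      rw [Set.ncard_eq_toFinset_card', Set.toFinset_setOf]
    rwa [this] at hxe
  have hBe : Even B.card := by
    have : {i : Fin 9 | y i = -(1 / 2)}.ncard = B.card := by
      rw [Set.ncard_eq_toFinset_card', Set.toFinset_setOf]
    rwa [this] at hye
  have hD : Finset.univ.filter (fun i => x i ≠ y i) = (A \ B) ∪ (B \ A) := by
    ext i
    by_cases hi : i = (8 : Fin 9)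
    · subst hi
      norm_num [hA, hB, hx8, hy8, Finset.mem_union, Finset.mem_sdiff, Finset.mem_filter]
    · rcases hxc i hi with h1 | h1 <;> rcases hyc i hi with h2 | h2 <;>
        norm_num [hA, hB, h1, h2, Finset.mem_union, Finset.mem_sdiff, Finset.mem_filter]
  rw [hD]
  have hdisj : Disjoint (A \ B) (B \ A) := by
    exact disjoint_sdiff_sdiff
  rw [Finset.card_union_of_disjoint hdisj]
  have e1 : (A \ B).card + (A ∩ B).card = A.card := Finset.card_sdiff_add_card_inter A B
  have e2 : (B \ A).card + (B ∩ A).card = B.card := Finset.card_sdiff_add_card_inter B A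
  have e3 : (A ∩ B).card = (B ∩ A).card := by rw [Finset.inter_comm]
  have : (A \ B).card + (B \ A).card + 2 * (A ∩ B).card = A.card + B.card := by omega
  have he : Even ((A \ B).card + (B \ A).card + 2 * (A ∩ B).card) := by
    rw [this]; exact hAe.add hBe
  rcases he with ⟨k, hk⟩
  exact ⟨k - (A ∩ B).card, by omega⟩

open Classical Finset in
lemma tails_inner_le {x y : EuclideanSpace ℝ (Fin 9)}
    (hx : x ∈ Lambda9Tails) (hy : y ∈ Lambda9Tails) (hne : y ≠ x) :
    ⟪x, y⟫ ≤ 1 := by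
  rw [tails_inner_eq hx hy]
  have hne' : (Finset.univ.filter (fun i => x i ≠ y i)).card ≠ 0 := by
    intro h
    apply hne
    have := Finset.card_eq_zero.mp h
    ext i
    by_contra hxy
    have : i ∈ Finset.univ.filter (fun i => x i ≠ y i) := by
      simp [Ne, eq_comm]
      intro h'; exact hxy h'.symm
    simp [‹Finset.univ.filter (fun i => x i ≠ y i) = ∅›] at this
  have heven := tails_diff_even hx hy
  have h2 : 2 ≤ (Finset.univ.filter (fun i => x i ≠ y i)).card := by
    rcases heven with ⟨k, hk⟩
    omega
  have : (2 : ℝ) ≤ ((Finset.univ.filter (fun i => x i ≠ y i)).card : ℝ) := by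
    exact_mod_cast h2
  linarith

open Classical Finset in
lemma tails_inner_self {x : EuclideanSpace ℝ (Fin 9)} (hx : x ∈ Lambda9Tails) :
    ⟪x, x⟫ = 2 := by
  rw [tails_inner_eq hx hx]
  simp

lemma tails_abs_le {x : EuclideanSpace ℝ (Fin 9)} (hx : x ∈ Lambda9Tails) (i : Fin 9) :
    |x i| ≤ 1/2 := by
  obtain ⟨hx8, hxc, -⟩ := hx
  by_cases hi : i = (8 : Fin 9)
  · subst hi; rw [hx8]; norm_num
  · rcases hxc i hi with h | h
    · rw [h, abs_of_nonneg] <;> norm_num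
    · rw [h, abs_neg, abs_of_nonneg] <;> norm_num

theorem statement7 :
    ∀ x ∈ Lambda9Tails,
      ∃ γ : Set.Icc (0 : ℝ) 1 → EuclideanSpace ℝ (Fin 9),
        Continuous γ ∧
        γ ⟨0, by norm_num⟩ = x ∧
        (∃ t, γ t ≠ x) ∧
        (∀ t, ‖γ t‖ ^ 2 = 2) ∧
        (∀ t, ∀ y ∈ Lambda9Kiss, y ≠ x → ⟪γ t, y⟫ ≤ 1) := by
  intro x hx
  set u : EuclideanSpace ℝ (Fin 9) := EuclideanSpace.single 8 (Real.sqrt 2) with hu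
  refine ⟨fun t => Real.cos ((t : ℝ)/4) • x + Real.sin ((t : ℝ)/4) • u, ?_, ?_, ?_, ?_, ?_⟩
  · fun_prop
  · simp
  · refine ⟨⟨1, by norm_num⟩, fun h => ?_⟩
    have h8 := congrArg (fun v : EuclideanSpace ℝ (Fin 9) => v 8) h
    simp only [PiLp.add_apply, PiLp.smul_apply, smul_eq_mul] at h8
    have hu8 : u 8 = Real.sqrt 2 := by rw [hu]; simp [EuclideanSpace.single_apply]
    rw [hx.1, hu8] at h8
    have hs : 0 < Real.sin ((1:ℝ)/4) :=
      Real.sin_pos_of_pos_of_lt_pi (by norm_num) (by linarith [Real.pi_gt_three])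
    have h2 : (0:ℝ) < Real.sqrt 2 := Real.sqrt_pos.mpr (by norm_num)
    nlinarith
  · intro t
    rw [← real_inner_self_eq_norm_sq]
    have hxu : ⟪x, u⟫ = 0 := by
      rw [hu, EuclideanSpace.inner_single_right]
      simp [hx.1]
    have huu : ⟪u, u⟫ = 2 := by
      rw [hu, EuclideanSpace.inner_single_right]
      simp [EuclideanSpace.single_apply]
    have hxx := tails_inner_self hx
    rw [inner_add_add_self]
    simp only [real_inner_smul_left, real_inner_smul_right]
    have hux : ⟪u, x⟫ = 0 := by rw [real_inner_comm]; exact hxu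
    rw [hxx, hux, hxu, huu]
    have := Real.sin_sq_add_cos_sq ((t : ℝ)/4)
    nlinarith
  · intro t y hy hne
    set θ : ℝ := (t : ℝ)/4 with hθ
    have ht0 : (0:ℝ) ≤ (t:ℝ) := t.2.1
    have ht1 : (t:ℝ) ≤ 1 := t.2.2
    have hθ0 : 0 ≤ θ := by positivity
    have hθ1 : θ ≤ 1/4 := by rw [hθ]; linarith
    have hcos0 : 0 ≤ Real.cos θ :=
      Real.cos_nonneg_of_mem_Icc ⟨by linarith [Real.pi_gt_three], by linarith [Real.pi_gt_three]⟩
    have hcos1 : Real.cos θ ≤ 1 := Real.cos_le_one θ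
    have hsin0 : 0 ≤ Real.sin θ :=
      Real.sin_nonneg_of_nonneg_of_le_pi hθ0 (by linarith [Real.pi_gt_three])
    have hsinθ : Real.sin θ ≤ 1/4 := le_trans (Real.sin_le hθ0) hθ1
    have hinner : ⟪Real.cos θ • x + Real.sin θ • u, y⟫
        = Real.cos θ * ⟪x, y⟫ + Real.sin θ * (Real.sqrt 2 * y 8) := by
      rw [inner_add_left, real_inner_smul_left, real_inner_smul_left, hu,
        EuclideanSpace.inner_single_left]
      simp
    rw [hinner]
    have hsqrt2 : Real.sqrt 2 ≤ 1.5 := by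
      rw [show (1.5 : ℝ) = Real.sqrt (1.5^2) from (Real.sqrt_sq (by norm_num)).symm]
      apply Real.sqrt_le_sqrt; norm_num
    have hsqrt2' : 0 < Real.sqrt 2 := Real.sqrt_pos.mpr (by norm_num)
    rcases hy with hyD | hyT
    · -- D root system
      obtain ⟨i, j, hij, s, tt, hs, htt, hyeq⟩ := hyD
      have hinxy : ⟪x, y⟫ = s * x i + tt * x j := by
        rw [hyeq, inner_add_right, real_inner_smul_right, real_inner_smul_right,
          EuclideanSpace.inner_single_right, EuclideanSpace.inner_single_right]
        simp
      have hy8 : y 8 = (if (8:Fin 9) = i then s else 0) + (if (8:Fin 9) = j then tt else 0) := by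
        rw [hyeq]
        simp only [PiLp.add_apply, PiLp.smul_apply, smul_eq_mul,
          EuclideanSpace.single_apply]
        by_cases h1 : (8:Fin 9) = i <;> by_cases h2 : (8:Fin 9) = j <;>
          simp [h1, h2]
      have hi8 : (8:Fin 9) ≠ i := by
        intro h
        have h1 : (i : ℕ) < (j : ℕ) := hij
        have h2 : (j : ℕ) < 9 := j.2
        have h3 : ((8:Fin 9) : ℕ) = (i : ℕ) := congrArg Fin.val h
        have h4 : ((8:Fin 9) : ℕ) = 8 := rfl
        omega
      have hsabs : |s| = 1 := by rcases hs with rfl | rfl <;> norm_num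
      have httabs : |tt| = 1 := by rcases htt with rfl | rfl <;> norm_num
      by_cases hj : (8:Fin 9) = j
      · -- j = 8 : the ninth coordinate of y is tt
        have hxj : x j = 0 := by rw [← hj]; exact hx.1
        have hy8' : y 8 = tt := by rw [hy8, if_neg hi8, if_pos hj, zero_add]
        have hc2 : |⟪x, y⟫| ≤ 1/2 := by
          rw [hinxy, hxj, mul_zero, add_zero, abs_mul, hsabs, one_mul]
          exact tails_abs_le hx i
        rw [hy8']
        have habs := abs_le.mp hc2
        have e1 : Real.cos θ * ⟪x, y⟫ ≤ 1/2 := by nlinarith [habs.1, habs.2]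
        have e2 : Real.sin θ * (Real.sqrt 2 * tt) ≤ 1/2 := by
          rcases htt with rfl | rfl
          · nlinarith
          · have : Real.sqrt 2 * (-1) ≤ 0 := by nlinarith
            nlinarith
        linarith
      · -- j ≠ 8 : the ninth coordinate of y is 0
        have hy8' : y 8 = 0 := by rw [hy8, if_neg hi8, if_neg hj, add_zero]
        have hc : |⟪x, y⟫| ≤ 1 := by
          rw [hinxy]
          calc |s * x i + tt * x j| ≤ |s * x i| + |tt * x j| := abs_add_le _ _
            _ = |x i| + |x j| := by rw [abs_mul, abs_mul, hsabs, httabs, one_mul, one_mul]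
            _ ≤ 1 := by linarith [tails_abs_le hx i, tails_abs_le hx j]
        rw [hy8', mul_zero, mul_zero, add_zero]
        have habs := abs_le.mp hc
        nlinarith [habs.1, habs.2]
    · -- Tails
      have hy8 : y 8 = 0 := hyT.1
      have hle := tails_inner_le hx hyT hne
      rw [hy8]
      rcases le_or_gt ⟪x, y⟫ 0 with hc | hc
      · have h1 : Real.cos θ * ⟪x, y⟫ ≤ 0 := mul_nonpos_of_nonneg_of_nonpos hcos0 hc
        rw [mul_zero, mul_zero, add_zero]
        linarith
      · have h1 : Real.cos θ * ⟪x, y⟫ ≤ ⟪x, y⟫ := by nlinarith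
        rw [mul_zero, mul_zero, add_zero]
        linarith
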